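/- Let F₂ be the free group on generators x, y, and let a, b ∈ F₂ commute. If the image of a in the abelianization F₂ᵃᵇ ≅ ℤ² is part of a basis of ℤ², then b is a power of a. -/

import Mathlib

private lemma free_noncomm : FreeGroup.of true * FreeGroup.of false ≠
    FreeGroup.of false * FreeGroup.of true := by decide

/-- A commutative free group is cyclic. -/
private lemma aux_cyclic (G : Type) [Group G] [IsFreeGroup G]
    (hc : ∀ x y : G, x * y = y * x) : ∃ c : G, ∀ g : G, ∃ n : ℤ, g = c ^ n := by
  classical
  obtain ⟨ι, ⟨B⟩⟩ := IsFreeGroup.nonempty_basis (G := G)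
  have hsub : ∀ i j : ι, i = j := by
    intro i j
    by_contra hij
    have h1 : B i * B j = B j * B i := hc _ _
    have h2 : FreeGroup.of i * FreeGroup.of j = FreeGroup.of j * FreeGroup.of i := by
      have := congrArg B.repr h1
      simpa using this
    have h3 := congrArg
      (FreeGroup.lift (fun k : ι => if k = i then FreeGroup.of true else FreeGroup.of false)) h2
    simp only [map_mul, FreeGroup.lift_apply_of, if_pos rfl, if_neg (Ne.symm hij)] at h3
    exact free_noncomm h3
  by_cases hι : Nonempty ι
  · obtain ⟨i⟩ := hι
    refine ⟨B i, fun g => ?_⟩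
    have htop : (⊤ : Subgroup (FreeGroup ι)) ≤ Subgroup.zpowers (FreeGroup.of i) := by
      rw [← FreeGroup.closure_range_of ι]
      refine (Subgroup.closure_le _).mpr ?_
      rintro x ⟨k, rfl⟩
      rw [hsub k i]
      exact Subgroup.mem_zpowers _
    obtain ⟨n, hn⟩ := htop (Subgroup.mem_top (B.repr g))
    refine ⟨n, B.repr.injective ?_⟩
    rw [map_zpow, B.repr_apply_coe]
    exact hn.symm
  · refine ⟨1, fun g => ⟨0, ?_⟩⟩
    have hempty : Set.range (FreeGroup.of : ι → FreeGroup ι) = ∅ :=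
      Set.range_eq_empty_iff.mpr (not_nonempty_iff.mp hι)
    have hbot : (⊤ : Subgroup (FreeGroup ι)) = ⊥ := by
      rw [← FreeGroup.closure_range_of ι, hempty, Subgroup.closure_empty]
    have : B.repr g = 1 := by
      have := Subgroup.mem_top (B.repr g)
      rw [hbot, Subgroup.mem_bot] at this
      exact this
    apply B.repr.injective
    simpa using this

/-- If a pair spans `ℤ²`, its determinant is a unit. -/
private lemma span_pair_isUnit (u w : Fin 2 → ℤ)
    (h : Submodule.span ℤ ({u, w} : Set (Fin 2 → ℤ)) = ⊤) :
    IsUnit (u 0 * w 1 - u 1 * w 0) := by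
  have h0 : (Pi.single 0 1 : Fin 2 → ℤ) ∈ Submodule.span ℤ ({u, w} : Set (Fin 2 → ℤ)) := by
    rw [h]; trivial
  have h1 : (Pi.single 1 1 : Fin 2 → ℤ) ∈ Submodule.span ℤ ({u, w} : Set (Fin 2 → ℤ)) := by
    rw [h]; trivial
  obtain ⟨α, β, hab⟩ := Submodule.mem_span_pair.mp h0
  obtain ⟨γ, δ, hcd⟩ := Submodule.mem_span_pair.mp h1
  have e00 : α * u 0 + β * w 0 = 1 := by
    have := congrFun hab 0; simpa using this
  have e01 : α * u 1 + β * w 1 = 0 := by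
    have := congrFun hab 1; simpa using this
  have e10 : γ * u 0 + δ * w 0 = 0 := by
    have := congrFun hcd 0; simpa using this
  have e11 : γ * u 1 + δ * w 1 = 1 := by
    have := congrFun hcd 1; simpa using this
  refine IsUnit.of_mul_eq_one (α * δ - β * γ) ?_
  have key : (u 0 * w 1 - u 1 * w 0) * (α * δ - β * γ) =
      (α * u 0 + β * w 0) * (γ * u 1 + δ * w 1) -
      (α * u 1 + β * w 1) * (γ * u 0 + δ * w 0) := by ring
  rw [key, e00, e01, e10, e11]; ring

/-- The abelianization map `F₂ → ℤ²`, sending the generators to the standard basis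
vectors (written multiplicatively). -/
noncomputable def abMap : FreeGroup (Fin 2) →* Multiplicative (Fin 2 → ℤ) :=
  FreeGroup.lift fun i => Multiplicative.ofAdd (Pi.single i 1)

/-- If `a, b ∈ F₂` commute and the image of `a` in the abelianization `ℤ²` is part
of a basis of `ℤ²`, then `b` is a power of `a`. -/
theorem pow_of_commute_basis (a b : FreeGroup (Fin 2))
    (hcomm : a * b = b * a)
    (hbasis : ∃ w : Fin 2 → ℤ,
      Submodule.span ℤ ({Multiplicative.toAdd (abMap a), w} : Set (Fin 2 → ℤ)) = ⊤) :
    ∃ n : ℤ, b = a ^ n := by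
  set H := Subgroup.closure ({a, b} : Set (FreeGroup (Fin 2))) with hH
  have ha : a ∈ H := Subgroup.subset_closure (by simp)
  have hb : b ∈ H := Subgroup.subset_closure (by simp)
  letI : CommGroup H := Subgroup.closureCommGroupOfComm (by
    rintro x (rfl | rfl) y (rfl | rfl)
    · rfl
    · exact hcomm
    · exact hcomm.symm
    · rfl)
  have hcom : ∀ x y : H, x * y = y * x := fun x y => mul_comm x y
  obtain ⟨c, hc⟩ := aux_cyclic H hcom
  obtain ⟨m, hm⟩ := hc ⟨a, ha⟩
  obtain ⟨n, hn⟩ := hc ⟨b, hb⟩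
  have hma : a = (c : FreeGroup (Fin 2)) ^ m := by
    have := congrArg (Subtype.val) hm
    simpa using this
  have hnb : b = (c : FreeGroup (Fin 2)) ^ n := by
    have := congrArg (Subtype.val) hn
    simpa using this
  obtain ⟨w, hw⟩ := hbasis
  have habm : Multiplicative.toAdd (abMap a) =
      m • Multiplicative.toAdd (abMap (c : FreeGroup (Fin 2))) := by
    rw [hma, map_zpow, toAdd_zpow]
  rw [habm] at hw
  have hdet := span_pair_isUnit _ _ hw
  have hmu : IsUnit m := by
    set v := Multiplicative.toAdd (abMap (c : FreeGroup (Fin 2)))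
    have h2 : (m • v) 0 * w 1 - (m • v) 1 * w 0 = m * (v 0 * w 1 - v 1 * w 0) := by
      simp [Pi.smul_apply, smul_eq_mul]; ring
    rw [h2] at hdet
    exact isUnit_of_mul_isUnit_left hdet
  have hm2 : m * m = 1 := by
    rcases Int.isUnit_iff.mp hmu with h | h <;> simp [h]
  refine ⟨m * n, ?_⟩
  rw [hnb, hma, ← zpow_mul, ← mul_assoc, hm2, one_mul]
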